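/- (Theorem 2 for arbitrary nominal center) Let ζ ∈ ℝ³ be a unit vector and for an agent i with neighbor set 𝒩ᵢ let w_{ij} = a_{ij} I₃ + b_{ij} ζζᵀ + c_{ij} ζ^× be weights satisfying Σ_{j ∈ 𝒩ᵢ} w_{ij}(r_j − r_i) = 0 for given points r_i, r_j ∈ ℝ³. Then for every c ∈ ℝ³, T ∈ ℝ³, k ∈ ℝ, and θ ∈ ℝ, setting q_ℓ = (c + T) + k R_ζ (r_ℓ − c) with R_ζ = I₃ + (sin θ) ζ^× + (1 − cos θ)(ζ^×)², one has Σ_{j ∈ 𝒩ᵢ} w_{ij}(q_j − q_i) = 0; i.e., each agent's weight constraint is preserved under simultaneous translation, uniform scaling, and rotation about ζ applied about any common center c. -/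
import Mathlib


open Matrix

/-- The skew-symmetric cross-product matrix of a vector in R^3. -/
def skewMat (ζ : Fin 3 → ℝ) : Matrix (Fin 3) (Fin 3) ℝ :=
  !![0, -ζ 2, ζ 1;
     ζ 2, 0, -ζ 0;
     -ζ 1, ζ 0, 0]

/-- The outer-product matrix of a vector in R^3. -/
def outerMat (ζ : Fin 3 → ℝ) : Matrix (Fin 3) (Fin 3) ℝ :=
  Matrix.vecMulVec ζ ζ

/-- The Rodrigues rotation matrix by angle θ about the axis ζ. -/
noncomputable def rodrigues (ζ : Fin 3 → ℝ) (θ : ℝ) : Matrix (Fin 3) (Fin 3) ℝ :=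
  1 + Real.sin θ • skewMat ζ + (1 - Real.cos θ) • (skewMat ζ) ^ 2

lemma weight_comm (ζ : Fin 3 → ℝ) (a b c : ℝ) (θ : ℝ) :
    (a • (1 : Matrix (Fin 3) (Fin 3) ℝ) + b • outerMat ζ + c • skewMat ζ) * rodrigues ζ θ
    = rodrigues ζ θ * (a • (1 : Matrix (Fin 3) (Fin 3) ℝ) + b • outerMat ζ + c • skewMat ζ) := by
  ext i j
  fin_cases i <;> fin_cases j <;>
    simp [rodrigues, skewMat, outerMat, Matrix.mul_apply, Fin.sum_univ_succ,
      Matrix.vecMulVec_apply, Matrix.one_apply, pow_two] <;> ring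

/-- Theorem 2 (arbitrary nominal center): an agent's augmented-Laplacian
weight constraint is preserved under simultaneous translation, uniform
scaling, and rotation about the unit axis ζ applied about any common
center c. -/
theorem constraint_preserved_any_center
    {ι : Type*} (ζ : Fin 3 → ℝ) (hζ : ζ ⬝ᵥ ζ = 1)
    (i : ι) (N : Finset ι)
    (a b c' : ι → ℝ)
    (w : ι → Matrix (Fin 3) (Fin 3) ℝ)
    (hw : ∀ j, w j =
      a j • (1 : Matrix (Fin 3) (Fin 3) ℝ) + b j • outerMat ζ + c' j • skewMat ζ)
    (r : ι → Fin 3 → ℝ)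
    (hconstraint : ∑ j ∈ N, (w j) *ᵥ (r j - r i) = 0)
    (c T : Fin 3 → ℝ) (k θ : ℝ)
    (q : ι → Fin 3 → ℝ)
    (hq : ∀ ℓ, q ℓ = (c + T) + k • (rodrigues ζ θ *ᵥ (r ℓ - c))) :
    ∑ j ∈ N, (w j) *ᵥ (q j - q i) = 0 := by
  have hdiff : ∀ j, q j - q i = k • (rodrigues ζ θ *ᵥ (r j - r i)) := by
    intro j
    rw [hq j, hq i]
    have : (r j - c) - (r i - c) = r j - r i := by abel
    rw [← this]
    simp [Matrix.mulVec_sub, smul_sub]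
  have hsum : rodrigues ζ θ *ᵥ ∑ j ∈ N, (w j) *ᵥ (r j - r i)
      = ∑ j ∈ N, rodrigues ζ θ *ᵥ ((w j) *ᵥ (r j - r i)) := by
    simpa only [Matrix.mulVecLin_apply] using
      map_sum ((rodrigues ζ θ).mulVecLin) (fun j => (w j) *ᵥ (r j - r i)) N
  calc ∑ j ∈ N, (w j) *ᵥ (q j - q i)
      = k • (rodrigues ζ θ *ᵥ ∑ j ∈ N, (w j) *ᵥ (r j - r i)) := by
        rw [hsum, Finset.smul_sum]
        refine Finset.sum_congr rfl fun j _ => ?_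
        rw [hdiff j, Matrix.mulVec_smul, Matrix.mulVec_mulVec, Matrix.mulVec_mulVec,
          hw j, weight_comm]
    _ = 0 := by rw [hconstraint, Matrix.mulVec_zero, smul_zero]
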